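/- arXiv:0912.5119 — 2 statements merged into one kernel-verified Lean document; each statement's English description precedes it below -/
import Mathlib

section
/- Let f be an odd positive integer, χ a Dirichlet character modulo f, r ≥ 1 an integer, q real with 0 < q < 1, x, w_1, …, w_r positive real numbers, and a_1, …, a_r positive real numbers. Then for every complex number s with Re(s) > 0, (1/Γ(s)) ∫_0^∞ t^{s-1} ( 2^r Σ_{(m_1,…,m_r)∈ℕ^r} (∏_{j=1}^r χ(m_j)) (-1)^{m_1+⋯+m_r} q^{a_1 m_1 + ⋯ + a_r m_r} e^{-[x + w_1 m_1 + ⋯ + w_r m_r]_q · t} ) dt = 2^r Σ_{(m_1,…,m_r)∈ℕ^r} (∏_{j=1}^r χ(m_j)) (-1)^{m_1+⋯+m_r} q^{a_1 m_1 + ⋯ + a_r m_r} [x + w_1 m_1 + ⋯ + w_r m_r]_q^{-s}, both series converging absolutely and the integral converging. -/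
open Finset MeasureTheory

/-- The `q`-analogue `[y]_q = (1 - q^y)/(1 - q)` (real power). -/
noncomputable def qnum (q y : ℝ) : ℝ := (1 - q ^ y) / (1 - q)

open Set

lemma summable_pi_geom {r : ℕ} {c : Fin r → ℝ} (h0 : ∀ i, 0 ≤ c i) (h1 : ∀ i, c i < 1) :
    Summable fun m : Fin r → ℕ => ∏ i, c i ^ m i := by
  induction r with
  | zero => exact .of_finite
  | succ n ih =>
    have h := ((summable_geometric_of_lt_one (h0 0) (h1 0)).mul_of_nonneg
      (ih (c := fun i => c i.succ) (fun i => h0 i.succ) (fun i => h1 i.succ))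
      (fun k => pow_nonneg (h0 0) k)
      (fun m => Finset.prod_nonneg fun i _ => pow_nonneg (h0 i.succ) _))
    have := (Fin.consEquiv (fun _ : Fin (n+1) => ℕ)).summable_iff
      (f := fun m : Fin (n+1) → ℕ => ∏ i, c i ^ m i)
    rw [← this]
    refine h.congr fun p => ?_
    simp [Fin.consEquiv, Fin.prod_univ_succ]

lemma qnum_pos {q : ℝ} (hq0 : 0 < q) (hq1 : q < 1) {y : ℝ} (hy : 0 < y) :
    0 < qnum q y := by
  have h1 : q ^ y < 1 := Real.rpow_lt_one hq0.le hq1 hy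
  exact div_pos (by linarith) (by linarith)

lemma qnum_mono {q : ℝ} (hq0 : 0 < q) (hq1 : q < 1) {y z : ℝ} (hyz : y ≤ z) :
    qnum q y ≤ qnum q z := by
  have := Real.rpow_le_rpow_of_exponent_ge hq0 hq1.le hyz
  have : q ^ z ≤ q ^ y := this
  apply div_le_div_of_nonneg_right (by linarith) (by linarith)


lemma aux_integrable {s : ℂ} (hs : 0 < s.re) {b : ℝ} (hb : 0 < b) :
    IntegrableOn (fun t : ℝ => (t : ℂ) ^ (s - 1) * Complex.exp (-(b : ℂ) * t)) (Set.Ioi 0) := by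
  have hbd : IntegrableOn (fun t : ℝ => t ^ (s.re - 1) * Real.exp (-b * t)) (Set.Ioi 0) := by
    have := integrableOn_rpow_mul_exp_neg_mul_rpow (p := 1) (s := s.re - 1) (b := b)
      (by linarith) one_pos hb
    refine this.congr_fun (fun t ht => by beta_reduce; rw [Real.rpow_one]) measurableSet_Ioi
  refine Integrable.mono' hbd ?_ ?_
  · refine (ContinuousOn.mul ?_ ?_).aestronglyMeasurable measurableSet_Ioi
    · exact fun t ht => (Complex.continuousAt_ofReal_cpow_const t _
        (Or.inr (ne_of_gt ht))).continuousWithinAt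
    · exact (Complex.continuous_exp.comp (by fun_prop)).continuousOn
  · rw [ae_restrict_iff' measurableSet_Ioi]
    filter_upwards with t ht
    rw [Set.mem_Ioi] at ht
    rw [norm_mul,
      Complex.norm_cpow_eq_rpow_re_of_pos ht, Complex.norm_exp]
    simp [Complex.sub_re, neg_mul]

lemma aux_integral {s : ℂ} (hs : 0 < s.re) {b : ℝ} (hb : 0 < b) :
    ∫ t : ℝ in Set.Ioi 0, (t : ℂ) ^ (s - 1) * Complex.exp (-(b : ℂ) * t)
      = (b : ℂ) ^ (-s) * Complex.Gamma s := by
  have h := Complex.integral_cpow_mul_exp_neg_mul_Ioi (a := s) hs hb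
  have h2 : ∀ t : ℝ, -(b : ℂ) * t = -((b : ℂ) * t) := fun t => by ring
  simp_rw [h2]
  rw [h]
  congr 1
  rw [one_div, Complex.inv_cpow _ _ (by
    rw [Complex.arg_ofReal_of_nonneg hb.le]; exact Real.pi_ne_zero.symm), ← Complex.cpow_neg]

lemma aux_norm_integral {s : ℂ} (hs : 0 < s.re) {b : ℝ} (hb : 0 < b) :
    ∫ t : ℝ in Set.Ioi 0, ‖(t : ℂ) ^ (s - 1) * Complex.exp (-(b : ℂ) * t)‖
      = (1 / b) ^ s.re * Real.Gamma s.re := by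
  rw [← Real.integral_rpow_mul_exp_neg_mul_Ioi hs hb]
  refine setIntegral_congr_fun measurableSet_Ioi (fun t ht => ?_)
  rw [Set.mem_Ioi] at ht
  rw [norm_mul,
    Complex.norm_cpow_eq_rpow_re_of_pos ht, Complex.norm_exp]
  simp [Complex.sub_re, neg_mul]

lemma master {ι : Type*} [Countable ι] (c : ι → ℂ) (B : ι → ℝ) (S : ι → ℝ) (K : ℝ)
    (hc : ∀ m, ‖c m‖ ≤ S m) (hS : Summable S)
    (hK : 0 < K) (hB : ∀ m, K ≤ B m) (R : ℂ)
    (s : ℂ) (hs : 0 < s.re) :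
    (∀ t : ℝ, 0 < t → Summable fun m => ‖c m * Complex.exp (-((B m : ℝ) : ℂ) * t)‖) ∧
    Summable (fun m => ‖c m * ((B m : ℝ) : ℂ) ^ (-s)‖) ∧
    IntegrableOn (fun t : ℝ => (t : ℂ) ^ (s - 1) *
      (R * ∑' m, c m * Complex.exp (-((B m : ℝ) : ℂ) * t))) (Set.Ioi 0) ∧
    (1 / Complex.Gamma s) * ∫ t in Set.Ioi (0 : ℝ), (t : ℂ) ^ (s - 1) *
        (R * ∑' m, c m * Complex.exp (-((B m : ℝ) : ℂ) * t))
      = R * ∑' m, c m * ((B m : ℝ) : ℂ) ^ (-s) := by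
  have hBpos : ∀ m, 0 < B m := fun m => hK.trans_le (hB m)
  have hS0 : ∀ m, 0 ≤ S m := fun m => (norm_nonneg _).trans (hc m)
  have hnorm : ∀ (m : ι) (t : ℝ),
      ‖c m * Complex.exp (-((B m : ℝ) : ℂ) * t)‖ = ‖c m‖ * Real.exp (-(B m * t)) := by
    intro m t
    rw [norm_mul]
    congr 1
    rw [show -((B m : ℝ) : ℂ) * t = ((-(B m * t) : ℝ) : ℂ) by push_cast; ring,
      Complex.norm_exp_ofReal]
  -- conjunct 1
  have conj1 : ∀ t : ℝ, 0 < t →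
      Summable fun m => ‖c m * Complex.exp (-((B m : ℝ) : ℂ) * t)‖ := by
    intro t ht
    refine Summable.of_nonneg_of_le (fun m => norm_nonneg _) (fun m => ?_) hS
    rw [hnorm]
    calc ‖c m‖ * Real.exp (-(B m * t)) ≤ S m * 1 := by
          apply mul_le_mul (hc m) ?_ (Real.exp_pos _).le (hS0 m)
          rw [← Real.exp_zero]
          exact Real.exp_le_exp.mpr (by nlinarith [hBpos m])
      _ = S m := mul_one _
  -- conjunct 2
  have conj2 : Summable (fun m => ‖c m * ((B m : ℝ) : ℂ) ^ (-s)‖) := by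
    refine Summable.of_nonneg_of_le (fun m => norm_nonneg _) (fun m => ?_) (hS.mul_right (K ^ (-s.re)))
    rw [norm_mul, Complex.norm_cpow_eq_rpow_re_of_pos (hBpos m)]
    rw [Complex.neg_re]
    exact mul_le_mul (hc m)
      (Real.rpow_le_rpow_of_nonpos hK (hB m) (by linarith))
      (Real.rpow_nonneg (hBpos m).le _) (hS0 m)
  -- uniform bound and continuity of the series
  have hbnd : ∀ (m : ι) (t : ℝ), 0 < t →
      ‖c m * Complex.exp (-((B m : ℝ) : ℂ) * t)‖ ≤ S m := by
    intro m t ht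
    rw [hnorm]
    calc ‖c m‖ * Real.exp (-(B m * t)) ≤ S m * 1 := by
          apply mul_le_mul (hc m) ?_ (Real.exp_pos _).le (hS0 m)
          rw [← Real.exp_zero]
          exact Real.exp_le_exp.mpr (by nlinarith [hBpos m])
      _ = S m := mul_one _
  have hGcont : ContinuousOn
      (fun t : ℝ => ∑' m, c m * Complex.exp (-((B m : ℝ) : ℂ) * t)) (Set.Ioi 0) := by
    refine (tendstoUniformlyOn_tsum hS (fun m t ht => hbnd m t ht)).continuousOn
      (Filter.Eventually.frequently (Filter.Eventually.of_forall fun N => ?_))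
    exact (continuous_finset_sum N fun m _ => continuous_const.mul
      (Complex.continuous_exp.comp (by fun_prop))).continuousOn
  have hmeas : AEStronglyMeasurable (fun t : ℝ => (t : ℂ) ^ (s - 1) *
      (R * ∑' m, c m * Complex.exp (-((B m : ℝ) : ℂ) * t)))
      (volume.restrict (Set.Ioi 0)) := by
    refine (ContinuousOn.mul ?_ (continuousOn_const.mul hGcont)).aestronglyMeasurable
      measurableSet_Ioi
    exact fun t ht => (Complex.continuousAt_ofReal_cpow_const t _
      (Or.inr (ne_of_gt ht))).continuousWithinAt
  have hGle : ∀ t : ℝ, 0 < t →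
      ‖∑' m, c m * Complex.exp (-((B m : ℝ) : ℂ) * t)‖
        ≤ (∑' m, S m) * Real.exp (-(K * t)) := by
    intro t ht
    calc ‖∑' m, c m * Complex.exp (-((B m : ℝ) : ℂ) * t)‖
        ≤ ∑' m, ‖c m * Complex.exp (-((B m : ℝ) : ℂ) * t)‖ :=
          norm_tsum_le_tsum_norm (conj1 t ht)
      _ ≤ ∑' m, S m * Real.exp (-(K * t)) := by
          refine Summable.tsum_le_tsum (fun m => ?_) (conj1 t ht) (hS.mul_right _)
          rw [hnorm]
          exact mul_le_mul (hc m)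
            (Real.exp_le_exp.mpr (by nlinarith [hB m])) (Real.exp_pos _).le (hS0 m)
      _ = (∑' m, S m) * Real.exp (-(K * t)) := tsum_mul_right
  have hbint : IntegrableOn
      (fun t : ℝ => t ^ (s.re - 1) * Real.exp (-(K * t)) * (‖R‖ * ∑' m, S m))
      (Set.Ioi 0) := by
    apply Integrable.mul_const
    have := integrableOn_rpow_mul_exp_neg_mul_rpow (p := 1) (s := s.re - 1) (b := K)
      (by linarith) one_pos hK
    exact this.congr_fun (fun t ht => by beta_reduce; rw [Real.rpow_one, neg_mul]) measurableSet_Ioi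
  have conj3 : IntegrableOn (fun t : ℝ => (t : ℂ) ^ (s - 1) *
      (R * ∑' m, c m * Complex.exp (-((B m : ℝ) : ℂ) * t))) (Set.Ioi 0) := by
    refine Integrable.mono' hbint hmeas ?_
    rw [ae_restrict_iff' measurableSet_Ioi]
    filter_upwards with t ht
    rw [Set.mem_Ioi] at ht
    calc ‖(t : ℂ) ^ (s - 1) * (R * ∑' m, c m * Complex.exp (-((B m : ℝ) : ℂ) * t))‖
        = t ^ (s.re - 1) * (‖R‖ * ‖∑' m, c m * Complex.exp (-((B m : ℝ) : ℂ) * t)‖) := by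
          rw [norm_mul, norm_mul,
            Complex.norm_cpow_eq_rpow_re_of_pos ht]
          simp [Complex.sub_re]
      _ ≤ t ^ (s.re - 1) * (‖R‖ * ((∑' m, S m) * Real.exp (-(K * t)))) := by
          gcongr t ^ (s.re - 1) * (‖R‖ * ?_) <;>
            first
              | exact hGle t ht
              | exact Real.rpow_nonneg ht.le _
      _ = t ^ (s.re - 1) * Real.exp (-(K * t)) * (‖R‖ * ∑' m, S m) := by ring
  have hFint : ∀ m, Integrable (fun t : ℝ =>
      (R * c m) * ((t : ℂ) ^ (s - 1) * Complex.exp (-((B m : ℝ) : ℂ) * t)))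
      (volume.restrict (Set.Ioi 0)) :=
    fun m => (aux_integrable hs (hBpos m)).const_mul _
  have hFnorm : ∀ m, (∫ t in Set.Ioi (0:ℝ),
      ‖(R * c m) * ((t : ℂ) ^ (s - 1) * Complex.exp (-((B m : ℝ) : ℂ) * t))‖)
      = ‖R * c m‖ * ((1 / B m) ^ s.re * Real.Gamma s.re) := by
    intro m
    simp_rw [norm_mul (R * c m)]
    rw [MeasureTheory.integral_const_mul, aux_norm_integral hs (hBpos m)]
  have hFsum : Summable fun m => ∫ t in Set.Ioi (0:ℝ),
      ‖(R * c m) * ((t : ℂ) ^ (s - 1) * Complex.exp (-((B m : ℝ) : ℂ) * t))‖ := by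
    refine Summable.of_nonneg_of_le
      (fun m => integral_nonneg fun t => norm_nonneg _) (fun m => ?_)
      (hS.mul_left (‖R‖ * ((1 / K) ^ s.re * Real.Gamma s.re)))
    rw [hFnorm m, norm_mul]
    calc ‖R‖ * ‖c m‖ * ((1 / B m) ^ s.re * Real.Gamma s.re)
        ≤ ‖R‖ * S m * ((1 / K) ^ s.re * Real.Gamma s.re) := by
          have h1 : (1 / B m) ^ s.re ≤ (1 / K) ^ s.re :=
            Real.rpow_le_rpow (one_div_nonneg.mpr (hBpos m).le) (one_div_le_one_div_of_le hK (hB m)) hs.le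
          have h2 : 0 ≤ Real.Gamma s.re := Real.Gamma_nonneg_of_nonneg hs.le
          gcongr ‖R‖ * ?_ * (?_ * Real.Gamma s.re) <;>
            first
              | exact hc m
              | exact h1
              | exact mul_nonneg (Real.rpow_nonneg (one_div_nonneg.mpr (hBpos m).le) _) h2
              | exact mul_nonneg (norm_nonneg _) ((norm_nonneg _).trans (hc m))
      _ = ‖R‖ * ((1 / K) ^ s.re * Real.Gamma s.re) * S m := by ring
  have key : (∫ t in Set.Ioi (0:ℝ), (t : ℂ) ^ (s - 1) *
      (R * ∑' m, c m * Complex.exp (-((B m : ℝ) : ℂ) * t)))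
      = ∑' m, ∫ t in Set.Ioi (0:ℝ),
          (R * c m) * ((t : ℂ) ^ (s - 1) * Complex.exp (-((B m : ℝ) : ℂ) * t)) := by
    rw [integral_tsum_of_summable_integral_norm hFint hFsum]
    refine setIntegral_congr_fun measurableSet_Ioi fun t ht => ?_
    calc (t : ℂ) ^ (s - 1) * (R * ∑' m, c m * Complex.exp (-((B m : ℝ) : ℂ) * t))
        = ((t : ℂ) ^ (s - 1) * R) * ∑' m, c m * Complex.exp (-((B m : ℝ) : ℂ) * t) := by
          ring
      _ = ∑' m, ((t : ℂ) ^ (s - 1) * R) *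
            (c m * Complex.exp (-((B m : ℝ) : ℂ) * t)) := tsum_mul_left.symm
      _ = ∑' m, (R * c m) * ((t : ℂ) ^ (s - 1) * Complex.exp (-((B m : ℝ) : ℂ) * t)) :=
          tsum_congr fun m => by ring
  have hFval : ∀ m, (∫ t in Set.Ioi (0:ℝ),
      (R * c m) * ((t : ℂ) ^ (s - 1) * Complex.exp (-((B m : ℝ) : ℂ) * t)))
      = (R * c m) * (((B m : ℝ) : ℂ) ^ (-s) * Complex.Gamma s) := fun m => by
    rw [MeasureTheory.integral_const_mul, aux_integral hs (hBpos m)]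
  refine ⟨conj1, conj2, conj3, ?_⟩
  rw [key]
  have hΓ : Complex.Gamma s ≠ 0 := Complex.Gamma_ne_zero_of_re_pos hs
  calc (1 / Complex.Gamma s) * ∑' m, ∫ t in Set.Ioi (0:ℝ),
        (R * c m) * ((t : ℂ) ^ (s - 1) * Complex.exp (-((B m : ℝ) : ℂ) * t))
      = (1 / Complex.Gamma s) * ∑' m,
          (Complex.Gamma s * R) * (c m * ((B m : ℝ) : ℂ) ^ (-s)) := by
        congr 1
        refine tsum_congr fun m => ?_
        rw [hFval m]; ring
    _ = (1 / Complex.Gamma s) * ((Complex.Gamma s * R) *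
          ∑' m, c m * ((B m : ℝ) : ℂ) ^ (-s)) := by rw [tsum_mul_left]
    _ = R * ∑' m, c m * ((B m : ℝ) : ℂ) ^ (-s) := by
        rw [← mul_assoc]
        field_simp

theorem stmt_12 (f : ℕ) (hf : 0 < f) (hfodd : Odd f) (χ : DirichletCharacter ℂ f)
    (r : ℕ) (hr : 1 ≤ r) (q : ℝ) (hq0 : 0 < q) (hq1 : q < 1)
    (x : ℝ) (hx : 0 < x) (w a : Fin r → ℝ) (hw : ∀ i, 0 < w i) (ha : ∀ i, 0 < a i)
    (s : ℂ) (hs : 0 < s.re) :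
    (∀ t : ℝ, 0 < t →
      Summable (fun m : Fin r → ℕ =>
        ‖(∏ j, χ ((m j : ℕ) : ZMod f)) * (-1 : ℂ) ^ (∑ i, m i) *
          ((q ^ (∑ i, a i * m i) : ℝ) : ℂ) *
            Complex.exp (-(((qnum q (x + ∑ i, w i * m i) : ℝ) : ℂ)) * t)‖)) ∧
    Summable (fun m : Fin r → ℕ =>
      ‖(∏ j, χ ((m j : ℕ) : ZMod f)) * (-1 : ℂ) ^ (∑ i, m i) *
        ((q ^ (∑ i, a i * m i) : ℝ) : ℂ) *
          ((qnum q (x + ∑ i, w i * m i) : ℝ) : ℂ) ^ (-s)‖) ∧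
    IntegrableOn (fun t : ℝ => (t : ℂ) ^ (s - 1) *
      ((2 : ℂ) ^ r * ∑' m : Fin r → ℕ,
        (∏ j, χ ((m j : ℕ) : ZMod f)) * (-1 : ℂ) ^ (∑ i, m i) *
          ((q ^ (∑ i, a i * m i) : ℝ) : ℂ) *
            Complex.exp (-(((qnum q (x + ∑ i, w i * m i) : ℝ) : ℂ)) * t))) (Set.Ioi 0) ∧
    (1 / Complex.Gamma s) * ∫ t in Set.Ioi (0 : ℝ), (t : ℂ) ^ (s - 1) *
        ((2 : ℂ) ^ r * ∑' m : Fin r → ℕ,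
          (∏ j, χ ((m j : ℕ) : ZMod f)) * (-1 : ℂ) ^ (∑ i, m i) *
            ((q ^ (∑ i, a i * m i) : ℝ) : ℂ) *
              Complex.exp (-(((qnum q (x + ∑ i, w i * m i) : ℝ) : ℂ)) * t)) =
      (2 : ℂ) ^ r * ∑' m : Fin r → ℕ,
        (∏ j, χ ((m j : ℕ) : ZMod f)) * (-1 : ℂ) ^ (∑ i, m i) *
          ((q ^ (∑ i, a i * m i) : ℝ) : ℂ) *
            ((qnum q (x + ∑ i, w i * m i) : ℝ) : ℂ) ^ (-s) := by
  have hB0 : 0 < qnum q x := qnum_pos hq0 hq1 hx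
  have hy : ∀ m : Fin r → ℕ, x ≤ x + ∑ i, w i * (m i : ℝ) := fun m =>
    le_add_of_nonneg_right (Finset.sum_nonneg fun i _ =>
      mul_nonneg (hw i).le (Nat.cast_nonneg _))
  have hc : ∀ m : Fin r → ℕ,
      ‖(∏ j, χ ((m j : ℕ) : ZMod f)) * (-1 : ℂ) ^ (∑ i, m i) *
        ((q ^ (∑ i, a i * (m i : ℝ)) : ℝ) : ℂ)‖ ≤ q ^ (∑ i, a i * (m i : ℝ)) := by
    intro m
    have h1 : ‖∏ j, χ ((m j : ℕ) : ZMod f)‖ ≤ 1 := by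
      rw [norm_prod]
      exact Finset.prod_le_one (fun j _ => norm_nonneg _) (fun j _ => χ.norm_le_one _)
    have h2 : ‖(-1 : ℂ) ^ (∑ i, m i)‖ = 1 := by simp
    have h3 : ‖((q ^ (∑ i, a i * (m i : ℝ)) : ℝ) : ℂ)‖ = q ^ (∑ i, a i * (m i : ℝ)) := by
      rw [Complex.norm_real]
      exact Real.norm_of_nonneg (Real.rpow_pos_of_pos hq0 _).le
    rw [norm_mul, norm_mul, h2, h3, mul_one]
    exact mul_le_of_le_one_left (Real.rpow_pos_of_pos hq0 _).le h1
  have hS : Summable (fun m : Fin r → ℕ => q ^ (∑ i, a i * (m i : ℝ))) := by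
    have heq : ∀ m : Fin r → ℕ, q ^ (∑ i, a i * (m i : ℝ)) = ∏ i, (q ^ a i) ^ (m i) := by
      intro m
      rw [Real.rpow_sum_of_pos hq0]
      exact Finset.prod_congr rfl fun i _ => by
        rw [Real.rpow_mul hq0.le, Real.rpow_natCast]
    exact (summable_pi_geom (fun i => (Real.rpow_pos_of_pos hq0 _).le)
      (fun i => Real.rpow_lt_one hq0.le hq1 (ha i))).congr fun m => (heq m).symm
  have hBle : ∀ m : Fin r → ℕ, qnum q x ≤ qnum q (x + ∑ i, w i * (m i : ℝ)) := fun m =>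
    qnum_mono hq0 hq1 (hy m)
  exact master
    (fun m : Fin r → ℕ => (∏ j, χ ((m j : ℕ) : ZMod f)) * (-1 : ℂ) ^ (∑ i, m i) *
      ((q ^ (∑ i, a i * (m i : ℝ)) : ℝ) : ℂ))
    (fun m => qnum q (x + ∑ i, w i * (m i : ℝ)))
    (fun m => q ^ (∑ i, a i * (m i : ℝ)))
    (qnum q x) hc hS hB0 hBle ((2 : ℂ) ^ r) s hs
end

section
/- Let f be an odd positive integer, χ a Dirichlet character modulo f, r ≥ 1 an integer, q real with 0 < q < 1, x, w_1, …, w_r positive real numbers, and a_1, …, a_r positive real numbers. For s ∈ ℂ define the Barnes-type multiple q-l-function l_{q,χ}^{(r)}(s, x|w_1,…,w_r; a_1,…,a_r) = 2^r Σ_{(m_1,…,m_r)∈ℕ^r} (∏_{j=1}^r χ(m_j)) (-1)^{m_1+⋯+m_r} q^{a_1 m_1 + ⋯ + a_r m_r} [x + w_1 m_1 + ⋯ + w_r m_r]_q^{-s}. Then this series converges absolutely for every s ∈ ℂ, and for every integer n ≥ 0 one has l_{q,χ}^{(r)}(-n, x|w_1,…,w_r; a_1,…,a_r) = (2^r/(1-q)^n)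 Σ_{l=0}^n C(n,l)(-1)^l q^{lx} Σ_{(b_1,…,b_r)∈{0,…,f-1}^r} (∏_{i=1}^r χ(b_i)) (-1)^{b_1+⋯+b_r} q^{Σ_{i=1}^r (l w_i + a_i) b_i} / ∏_{j=1}^r (1 + q^{(l w_j + a_j) f}). -/
open Finset

lemma rpow_sum_aux {q : ℝ} (hq : 0 < q) {ι : Type*} (s : Finset ι) (c : ι → ℝ) :
    q ^ (∑ i ∈ s, c i) = ∏ i ∈ s, q ^ (c i) := by
  rw [Real.rpow_def_of_pos hq, Finset.mul_sum, Real.exp_sum]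
  exact Finset.prod_congr rfl fun i _ => (Real.rpow_def_of_pos hq _).symm

lemma aux_summable_norm (f : ℕ) (χ : DirichletCharacter ℂ f) {u : ℝ}
    (hu0 : 0 ≤ u) (hu1 : u < 1) :
    Summable (fun m : ℕ => ‖χ ((m : ℕ) : ZMod f) * (-1 : ℂ) ^ m * ((u ^ m : ℝ) : ℂ)‖) := by
  apply Summable.of_nonneg_of_le (fun m => norm_nonneg _) (fun m => ?_)
    (summable_geometric_of_lt_one hu0 hu1)
  rw [norm_mul, norm_mul]
  have h1 : ‖χ ((m : ℕ) : ZMod f)‖ ≤ 1 := DirichletCharacter.norm_le_one χ _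
  have h2 : ‖(-1 : ℂ) ^ m‖ = 1 := by simp
  have h3 : ‖((u ^ m : ℝ) : ℂ)‖ = u ^ m := by
    rw [Complex.norm_real, Real.norm_of_nonneg (pow_nonneg hu0 m)]
  rw [h2, h3, mul_one]
  have : 0 ≤ u ^ m := pow_nonneg hu0 m
  nlinarith [norm_nonneg (χ ((m : ℕ) : ZMod f))]

lemma aux_tsum_eq (f : ℕ) (hf : 0 < f) (hodd : Odd f) (χ : DirichletCharacter ℂ f) {u : ℝ}
    (hu0 : 0 < u) (hu1 : u < 1) :
    ∑' m : ℕ, χ ((m : ℕ) : ZMod f) * (-1 : ℂ) ^ m * ((u ^ m : ℝ) : ℂ)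
      = (∑ b : Fin f, χ ((b : ℕ) : ZMod f) * (-1 : ℂ) ^ (b : ℕ) * ((u ^ (b : ℕ) : ℝ) : ℂ))
        / (1 + (u : ℂ) ^ f) := by
  haveI : NeZero f := ⟨hf.ne'⟩
  set g : ℕ → ℂ := fun m => χ ((m : ℕ) : ZMod f) * (-1 : ℂ) ^ m * ((u ^ m : ℝ) : ℂ) with hg
  set A : Fin f → ℂ := fun b => χ ((b : ℕ) : ZMod f) * (-1 : ℂ) ^ (b : ℕ) * ((u ^ (b : ℕ) : ℝ) : ℂ)
    with hA
  set c : ℂ := -((u : ℂ) ^ f) with hc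
  have hcn : ‖c‖ < 1 := by
    rw [hc, norm_neg]
    have : ‖((u : ℂ)) ^ f‖ = u ^ f := by
      rw [norm_pow, Complex.norm_real, Real.norm_of_nonneg hu0.le]
    rw [this]
    exact pow_lt_one₀ hu0.le hu1 hf.ne'
  have key : ∀ p : ℕ × Fin f, g ((Nat.divModEquiv f).symm p) = A p.2 * c ^ p.1 := by
    rintro ⟨k, b⟩
    simp only [Nat.divModEquiv, Equiv.coe_fn_symm_mk]
    have hcast : (((k * f + (b : ℕ) : ℕ)) : ZMod f) = ((b : ℕ) : ZMod f) := by
      push_cast [ZMod.natCast_self]; ring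
    have hneg : (-1 : ℂ) ^ (k * f + (b : ℕ)) = (-1 : ℂ) ^ k * (-1 : ℂ) ^ (b : ℕ) := by
      rw [pow_add, mul_comm k f, pow_mul, hodd.neg_one_pow]
    have hu' : ((u ^ (k * f + (b : ℕ)) : ℝ) : ℂ) = ((u : ℂ) ^ f) ^ k * ((u ^ (b : ℕ) : ℝ) : ℂ) := by
      push_cast
      rw [pow_add, pow_mul]
      ring
    rw [hg]
    simp only [hcast, hneg, hu']
    rw [hA, hc, neg_pow]
    ring
  have hgs : Summable g := (aux_summable_norm f χ hu0.le hu1).of_norm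
  have hsum2 : Summable (fun p : ℕ × Fin f => A p.2 * c ^ p.1) := by
    have := ((Nat.divModEquiv f).symm.summable_iff (f := g)).mpr hgs
    exact this.congr key
  calc ∑' m : ℕ, g m = ∑' p : ℕ × Fin f, g ((Nat.divModEquiv f).symm p) :=
        ((Nat.divModEquiv f).symm.tsum_eq g).symm
    _ = ∑' p : ℕ × Fin f, A p.2 * c ^ p.1 := tsum_congr key
    _ = ∑' (k : ℕ) (b : Fin f), A b * c ^ k := Summable.tsum_prod' hsum2 (fun _ => .of_finite)
    _ = ∑' k : ℕ, (∑ b : Fin f, A b) * c ^ k := by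
        refine tsum_congr fun k => ?_
        rw [tsum_fintype, ← Finset.sum_mul]
    _ = (∑ b : Fin f, A b) * ∑' k : ℕ, c ^ k := tsum_mul_left
    _ = (∑ b : Fin f, A b) * (1 - c)⁻¹ := by rw [tsum_geometric_of_norm_lt_one hcn]
    _ = (∑ b : Fin f, A b) / (1 + (u : ℂ) ^ f) := by rw [hc, div_eq_mul_inv, sub_neg_eq_add]

lemma pi_summable_nonneg : ∀ (r : ℕ) (g : Fin r → ℕ → ℝ), (∀ j n, 0 ≤ g j n) →
    (∀ j, Summable (g j)) → Summable (fun m : Fin r → ℕ => ∏ j, g j (m j)) := by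
  intro r
  induction r with
  | zero => intro g _ _; exact .of_finite
  | succ r ih =>
    intro g h0 hs
    rw [← (Fin.consEquiv (fun _ : Fin (r+1) => ℕ)).summable_iff]
    have : ∀ z : ℕ × (Fin r → ℕ),
        (∏ j, g j ((Fin.consEquiv (fun _ : Fin (r+1) => ℕ)) z j))
          = g 0 z.1 * ∏ j : Fin r, g j.succ (z.2 j) := by
      rintro ⟨x, p⟩
      rw [Fin.prod_univ_succ]
      simp [Fin.consEquiv]
    have hS : Summable (fun z : ℕ × (Fin r → ℕ) => g 0 z.1 * ∏ j : Fin r, g j.succ (z.2 j)) :=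
      Summable.mul_of_nonneg (f := g 0)
        (g := fun p : Fin r → ℕ => ∏ j : Fin r, g j.succ (p j)) (hs 0) (ih (fun j => g j.succ)
        (fun j n => h0 _ n)
        (fun j => hs _)) (fun n => h0 0 n) (fun p => Finset.prod_nonneg fun j _ => h0 _ _)
    exact hS.congr (fun z => (this z).symm)

lemma pi_tsum_prod : ∀ (r : ℕ) (g : Fin r → ℕ → ℂ), (∀ j, Summable (fun n => ‖g j n‖)) →
    Summable (fun m : Fin r → ℕ => ‖∏ j, g j (m j)‖) ∧
    ∑' m : Fin r → ℕ, ∏ j, g j (m j) = ∏ j, ∑' n, g j n := by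
  intro r
  induction r with
  | zero =>
    intro g _
    constructor
    · exact .of_finite
    · simp only [Finset.univ_eq_empty, Finset.prod_empty]
      exact tsum_eq_single (default : Fin 0 → ℕ)
        (fun b' hb' => absurd (Subsingleton.elim b' default) hb')
  | succ r ih =>
    intro g hg
    have hnorm : ∀ m : Fin (r+1) → ℕ, ‖∏ j, g j (m j)‖ = ∏ j, ‖g j (m j)‖ :=
      fun m => norm_prod _ _
    obtain ⟨ihs, ihe⟩ := ih (fun j => g j.succ) (fun j => hg j.succ)
    have hGnorm : Summable (fun p : Fin r → ℕ => ‖∏ j : Fin r, g j.succ (p j)‖) := ihs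
    constructor
    · refine Summable.congr ?_ (fun m => (hnorm m).symm)
      exact pi_summable_nonneg (r+1) (fun j n => ‖g j n‖) (fun j n => norm_nonneg _)
        (fun j => hg j)
    · have key : ∀ z : ℕ × (Fin r → ℕ),
          (∏ j, g j ((Fin.consEquiv (fun _ : Fin (r+1) => ℕ)) z j))
            = g 0 z.1 * ∏ j : Fin r, g j.succ (z.2 j) := by
        rintro ⟨x, p⟩
        rw [Fin.prod_univ_succ]
        simp [Fin.consEquiv]
      calc ∑' m : Fin (r+1) → ℕ, ∏ j, g j (m j)
          = ∑' z : ℕ × (Fin r → ℕ), ∏ j, g j ((Fin.consEquiv (fun _ : Fin (r+1) => ℕ)) z j) :=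
            ((Fin.consEquiv (fun _ : Fin (r+1) => ℕ)).tsum_eq _).symm
        _ = ∑' z : ℕ × (Fin r → ℕ), g 0 z.1 * ∏ j : Fin r, g j.succ (z.2 j) := tsum_congr key
        _ = (∑' n, g 0 n) * ∑' p : Fin r → ℕ, ∏ j : Fin r, g j.succ (p j) :=
            (tsum_mul_tsum_of_summable_norm (hg 0) hGnorm).symm
        _ = ∏ j : Fin (r+1), ∑' n, g j n := by rw [ihe, Fin.prod_univ_succ]

theorem stmt_13 (f : ℕ) (hf : 0 < f) (hfodd : Odd f) (χ : DirichletCharacter ℂ f)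
    (r : ℕ) (hr : 1 ≤ r) (q : ℝ) (hq0 : 0 < q) (hq1 : q < 1)
    (x : ℝ) (hx : 0 < x) (w a : Fin r → ℝ) (hw : ∀ i, 0 < w i) (ha : ∀ i, 0 < a i) :
    (∀ s : ℂ,
      Summable (fun m : Fin r → ℕ =>
        ‖(∏ j, χ ((m j : ℕ) : ZMod f)) * (-1 : ℂ) ^ (∑ i, m i) *
          ((q ^ (∑ i, a i * m i) : ℝ) : ℂ) *
            ((qnum q (x + ∑ i, w i * m i) : ℝ) : ℂ) ^ (-s)‖)) ∧
    ∀ n : ℕ,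
      (2 : ℂ) ^ r * ∑' m : Fin r → ℕ,
          (∏ j, χ ((m j : ℕ) : ZMod f)) * (-1 : ℂ) ^ (∑ i, m i) *
            ((q ^ (∑ i, a i * m i) : ℝ) : ℂ) *
              ((qnum q (x + ∑ i, w i * m i) : ℝ) : ℂ) ^ (-(-(n : ℂ))) =
        (2 : ℂ) ^ r / ((1 : ℂ) - (q : ℂ)) ^ n *
          ∑ l ∈ range (n + 1),
            (n.choose l : ℂ) * (-1) ^ l * ((q ^ ((l : ℝ) * x) : ℝ) : ℂ) *
              ∑ b : Fin r → Fin f,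
                (∏ i, χ ((b i : ℕ) : ZMod f)) * (-1 : ℂ) ^ (∑ i, (b i : ℕ)) *
                  ((q ^ (∑ i, ((l : ℝ) * w i + a i) * (b i : ℕ)) : ℝ) : ℂ) /
                    ∏ j, (((1 + q ^ (((l : ℝ) * w j + a j) * f) : ℝ)) : ℂ) := by
  have hq1' : 0 < 1 - q := by linarith
  have hrw : ∀ (T : ℝ) (k : ℕ), (q ^ T) ^ k = q ^ (T * k) := by
    intro T k
    rw [← Real.rpow_natCast (q ^ T) k, ← Real.rpow_mul hq0.le]
  constructor
  · -- Summability
    intro s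
    set t : ℝ := (-s).re with ht
    have hqx1 : q ^ x < 1 := Real.rpow_lt_one hq0.le hq1 hx
    set ε : ℝ := (1 - q ^ x) / (1 - q) with hε'
    set M : ℝ := 1 / (1 - q) with hM'
    have hε : 0 < ε := div_pos (by linarith) hq1'
    have hM : 0 < M := div_pos one_pos hq1'
    set K : ℝ := ε ^ t + M ^ t with hK
    have hKnn : 0 ≤ K := add_nonneg (Real.rpow_nonneg hε.le t) (Real.rpow_nonneg hM.le t)
    have hbound : ∀ m : Fin r → ℕ,
        ‖(∏ j, χ ((m j : ℕ) : ZMod f)) * (-1 : ℂ) ^ (∑ i, m i) *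
          ((q ^ (∑ i, a i * m i) : ℝ) : ℂ) *
            ((qnum q (x + ∑ i, w i * m i) : ℝ) : ℂ) ^ (-s)‖
          ≤ K * ∏ j, (q ^ a j) ^ (m j) := by
      intro m
      have hxY : x ≤ x + ∑ i, w i * (m i : ℝ) := by
        have : (0:ℝ) ≤ ∑ i, w i * (m i : ℝ) :=
          Finset.sum_nonneg fun i _ => mul_nonneg (hw i).le (Nat.cast_nonneg _)
        linarith
      have hqY : q ^ (x + ∑ i, w i * (m i : ℝ)) ≤ q ^ x :=
        Real.rpow_le_rpow_of_exponent_ge hq0 hq1.le hxY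
      have hyε : ε ≤ qnum q (x + ∑ i, w i * (m i : ℝ)) := by
        rw [qnum, hε']
        exact (div_le_div_iff_of_pos_right hq1').mpr (by linarith)
      have hyM : qnum q (x + ∑ i, w i * (m i : ℝ)) ≤ M := by
        rw [qnum, hM']
        have := Real.rpow_nonneg hq0.le (x + ∑ i, w i * (m i : ℝ))
        exact (div_le_div_iff_of_pos_right hq1').mpr (by linarith)
      have hypos : 0 < qnum q (x + ∑ i, w i * (m i : ℝ)) := lt_of_lt_of_le hε hyε
      have h4 : ‖((qnum q (x + ∑ i, w i * (m i : ℝ)) : ℝ) : ℂ) ^ (-s)‖ ≤ K := by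
        rw [Complex.norm_cpow_eq_rpow_re_of_pos hypos, ← ht]
        rcases le_or_gt 0 t with h | h
        · have h5 := Real.rpow_le_rpow hypos.le hyM h
          have h0 : 0 ≤ ε ^ t := Real.rpow_nonneg hε.le t
          rw [hK]; linarith
        · have h5 := Real.rpow_le_rpow_of_nonpos hε hyε h.le
          have h0 : 0 ≤ M ^ t := Real.rpow_nonneg hM.le t
          rw [hK]; linarith
      have h3 : ‖((q ^ (∑ i, a i * (m i : ℝ)) : ℝ) : ℂ)‖ = ∏ j, (q ^ a j) ^ (m j) := by
        rw [Complex.norm_real, Real.norm_of_nonneg (Real.rpow_nonneg hq0.le _),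
          rpow_sum_aux hq0]
        exact Finset.prod_congr rfl fun j _ => (hrw _ _).symm
      have h1 : ‖∏ j, χ ((m j : ℕ) : ZMod f)‖ ≤ 1 := by
        rw [norm_prod]
        exact Finset.prod_le_one (fun j _ => norm_nonneg _)
          (fun j _ => DirichletCharacter.norm_le_one χ _)
      have h2 : ‖(-1 : ℂ) ^ (∑ i, m i)‖ = 1 := by simp
      have hBnn : (0:ℝ) ≤ ∏ j, (q ^ a j) ^ (m j) :=
        Finset.prod_nonneg fun j _ => pow_nonneg (Real.rpow_nonneg hq0.le _) _
      rw [norm_mul, norm_mul, norm_mul, h2, h3, mul_one]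
      have haux : ‖∏ j, χ ((m j : ℕ) : ZMod f)‖ *
          ‖((qnum q (x + ∑ i, w i * (m i : ℝ)) : ℝ) : ℂ) ^ (-s)‖ ≤ 1 * K :=
        mul_le_mul h1 h4 (norm_nonneg _) zero_le_one
      nlinarith [norm_nonneg (∏ j, χ ((m j : ℕ) : ZMod f)),
        norm_nonneg (((qnum q (x + ∑ i, w i * (m i : ℝ)) : ℝ) : ℂ) ^ (-s))]
    refine Summable.of_nonneg_of_le (fun m => norm_nonneg _) hbound ?_
    exact (pi_summable_nonneg r (fun j k => (q ^ a j) ^ k)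
      (fun j k => pow_nonneg (Real.rpow_nonneg hq0.le _) k)
      (fun j => summable_geometric_of_lt_one (Real.rpow_nonneg hq0.le _)
        (Real.rpow_lt_one hq0.le hq1 (ha j)))).mul_left K
  · -- Value at nonpositive integers
    intro n
    simp only [neg_neg]
    have hu0 : ∀ (l : ℕ) (j : Fin r), 0 < q ^ ((l : ℝ) * w j + a j) :=
      fun l j => Real.rpow_pos_of_pos hq0 _
    have hupos : ∀ (l : ℕ) (j : Fin r), 0 < (l : ℝ) * w j + a j :=
      fun l j => add_pos_of_nonneg_of_pos (mul_nonneg (Nat.cast_nonneg _) (hw j).le) (ha j)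
    have hu1 : ∀ (l : ℕ) (j : Fin r), q ^ ((l : ℝ) * w j + a j) < 1 :=
      fun l j => Real.rpow_lt_one hq0.le hq1 (hupos l j)
    -- one-variable series
    have hhs : ∀ (l : ℕ) (j : Fin r), Summable (fun k : ℕ =>
        ‖χ ((k : ℕ) : ZMod f) * (-1 : ℂ) ^ k * (((q ^ ((l : ℝ) * w j + a j)) ^ k : ℝ) : ℂ)‖) :=
      fun l j => aux_summable_norm f χ (hu0 l j).le (hu1 l j)
    -- pointwise expansion of the summand
    have hterm : ∀ m : Fin r → ℕ,
        (∏ j, χ ((m j : ℕ) : ZMod f)) * (-1 : ℂ) ^ (∑ i, m i) *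
            ((q ^ (∑ i, a i * m i) : ℝ) : ℂ) *
              ((qnum q (x + ∑ i, w i * m i) : ℝ) : ℂ) ^ ((n : ℕ) : ℂ) =
          ∑ l ∈ range (n + 1),
            (((1 : ℂ) - q)⁻¹ ^ n * (n.choose l : ℂ) * (-1) ^ l * ((q ^ ((l : ℝ) * x) : ℝ) : ℂ)) *
              ∏ j, (χ ((m j : ℕ) : ZMod f) * (-1 : ℂ) ^ (m j) *
                (((q ^ ((l : ℝ) * w j + a j)) ^ (m j) : ℝ) : ℂ)) := by
      intro m
      rw [Complex.cpow_natCast]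
      have hstep1 : ((qnum q (x + ∑ i, w i * m i) : ℝ) : ℂ) ^ n
          = ∑ l ∈ range (n + 1), ((1 : ℂ) - q)⁻¹ ^ n * (n.choose l : ℂ) * (-1) ^ l *
              ((q ^ ((x + ∑ i, w i * (m i : ℝ)) * l) : ℝ) : ℂ) := by
        rw [qnum]
        push_cast
        rw [div_pow, div_eq_mul_inv, ← inv_pow, mul_comm]
        rw [show ((1 : ℂ) - (q ^ (x + ∑ i, w i * (m i : ℝ)) : ℝ)) =
            -((q ^ (x + ∑ i, w i * (m i : ℝ)) : ℝ) : ℂ) + 1 by ring, add_pow, Finset.mul_sum]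
        refine Finset.sum_congr rfl fun l hl => ?_
        have hv : ((q ^ ((x + ∑ i, w i * (m i : ℝ)) * l) : ℝ) : ℂ)
            = ((q ^ (x + ∑ i, w i * (m i : ℝ)) : ℝ) : ℂ) ^ l := by
          rw [← hrw, Complex.ofReal_pow]
        rw [hv, neg_pow, one_pow]
        ring
      have hstep2 : ∀ l : ℕ, q ^ (∑ i, a i * (m i : ℝ)) * q ^ ((x + ∑ i, w i * (m i : ℝ)) * l)
          = q ^ ((l : ℝ) * x) * ∏ j, (q ^ ((l : ℝ) * w j + a j)) ^ (m j) := by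
        intro l
        have hp : ∏ j, (q ^ ((l : ℝ) * w j + a j)) ^ (m j)
            = q ^ (∑ j, ((l : ℝ) * w j + a j) * (m j : ℝ)) := by
          rw [rpow_sum_aux hq0]
          exact Finset.prod_congr rfl fun j _ => hrw _ _
        rw [hp, ← Real.rpow_add hq0, ← Real.rpow_add hq0]
        congr 1
        have hsplit : ∑ j, ((l : ℝ) * w j + a j) * (m j : ℝ)
            = (l : ℝ) * (∑ j, w j * (m j : ℝ)) + ∑ j, a j * (m j : ℝ) := by
          rw [Finset.mul_sum, ← Finset.sum_add_distrib]
          exact Finset.sum_congr rfl fun j _ => by ring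
        rw [hsplit]
        ring
      rw [hstep1, Finset.mul_sum]
      refine Finset.sum_congr rfl fun l hl => ?_
      have hprod : ∏ j, (χ ((m j : ℕ) : ZMod f) * (-1 : ℂ) ^ (m j) *
            (((q ^ ((l : ℝ) * w j + a j)) ^ (m j) : ℝ) : ℂ))
          = (∏ j, χ ((m j : ℕ) : ZMod f)) * (-1 : ℂ) ^ (∑ i, m i) *
            ((∏ j, (q ^ ((l : ℝ) * w j + a j)) ^ (m j) : ℝ) : ℂ) := by
        rw [Finset.prod_mul_distrib, Finset.prod_mul_distrib, Finset.prod_pow_eq_pow_sum,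
          Complex.ofReal_prod]
      rw [hprod]
      have hc := congrArg (fun y : ℝ => (y : ℂ)) (hstep2 l)
      push_cast at hc ⊢
      linear_combination ((∏ j, χ ((m j : ℕ) : ZMod f)) * (-1 : ℂ) ^ (∑ i, m i) *
        (((1 : ℂ) - q)⁻¹ ^ n * (n.choose l : ℂ) * (-1) ^ l)) * hc
    -- sum the series
    have hsum_each : ∀ l ∈ range (n + 1), Summable (fun m : Fin r → ℕ =>
        (((1 : ℂ) - q)⁻¹ ^ n * (n.choose l : ℂ) * (-1) ^ l * ((q ^ ((l : ℝ) * x) : ℝ) : ℂ)) *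
          ∏ j, (χ ((m j : ℕ) : ZMod f) * (-1 : ℂ) ^ (m j) *
            (((q ^ ((l : ℝ) * w j + a j)) ^ (m j) : ℝ) : ℂ))) := by
      intro l _
      exact (((pi_tsum_prod r _ (fun j => hhs l j)).1).of_norm).mul_left _
    have hamain : (∑' m : Fin r → ℕ,
        (∏ j, χ ((m j : ℕ) : ZMod f)) * (-1 : ℂ) ^ (∑ i, m i) *
            ((q ^ (∑ i, a i * m i) : ℝ) : ℂ) *
              ((qnum q (x + ∑ i, w i * m i) : ℝ) : ℂ) ^ ((n : ℕ) : ℂ))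
        = ∑ l ∈ range (n + 1),
            (((1 : ℂ) - q)⁻¹ ^ n * (n.choose l : ℂ) * (-1) ^ l * ((q ^ ((l : ℝ) * x) : ℝ) : ℂ)) *
              ∏ j, ∑' k : ℕ, (χ ((k : ℕ) : ZMod f) * (-1 : ℂ) ^ k *
                (((q ^ ((l : ℝ) * w j + a j)) ^ k : ℝ) : ℂ)) := by
      rw [tsum_congr hterm, Summable.tsum_finsetSum hsum_each]
      refine Finset.sum_congr rfl fun l _ => ?_
      rw [tsum_mul_left, (pi_tsum_prod r _ (fun j => hhs l j)).2]
    rw [hamain]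
    -- evaluate the one-dimensional sums
    have hone : ∀ (l : ℕ) (j : Fin r),
        (∑' k : ℕ, (χ ((k : ℕ) : ZMod f) * (-1 : ℂ) ^ k *
            (((q ^ ((l : ℝ) * w j + a j)) ^ k : ℝ) : ℂ)))
        = (∑ b : Fin f, χ ((b : ℕ) : ZMod f) * (-1 : ℂ) ^ (b : ℕ) *
            (((q ^ ((l : ℝ) * w j + a j)) ^ (b : ℕ) : ℝ) : ℂ))
          / (1 + ((q ^ ((l : ℝ) * w j + a j) : ℝ) : ℂ) ^ f) :=
      fun l j => aux_tsum_eq f hf hfodd χ (hu0 l j) (hu1 l j)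
    have hfin : ∀ l : ℕ,
        (∏ j, ∑' k : ℕ, (χ ((k : ℕ) : ZMod f) * (-1 : ℂ) ^ k *
            (((q ^ ((l : ℝ) * w j + a j)) ^ k : ℝ) : ℂ)))
        = (∑ b : Fin r → Fin f,
            (∏ i, χ ((b i : ℕ) : ZMod f)) * (-1 : ℂ) ^ (∑ i, (b i : ℕ)) *
              ((q ^ (∑ i, ((l : ℝ) * w i + a i) * (b i : ℕ)) : ℝ) : ℂ))
            / ∏ j, (((1 + q ^ (((l : ℝ) * w j + a j) * f) : ℝ)) : ℂ) := by
      intro l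
      rw [Finset.prod_congr rfl (fun j _ => hone l j), Finset.prod_div_distrib]
      congr 1
      · rw [Finset.prod_univ_sum (fun _ => (univ : Finset (Fin f)))]
        rw [Fintype.piFinset_univ]
        refine Finset.sum_congr rfl fun b _ => ?_
        rw [Finset.prod_mul_distrib, Finset.prod_mul_distrib, Finset.prod_pow_eq_pow_sum]
        congr 1
        rw [← Complex.ofReal_prod]
        congr 1
        rw [rpow_sum_aux hq0]
        exact Finset.prod_congr rfl fun j _ => hrw _ _
      · refine Finset.prod_congr rfl fun j _ => ?_
        rw [← hrw ((l : ℝ) * w j + a j) f]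
        push_cast
        ring
    rw [Finset.sum_congr rfl (fun l _ => by rw [hfin l])]
    rw [Finset.mul_sum, Finset.mul_sum]
    refine Finset.sum_congr rfl fun l _ => ?_
    rw [← Finset.sum_div]
    ring
end
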